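/- Let α ∈ (0,1/2) and L, M > 0, and let h, σ : [0,1] → ℝ be measurable with |h| ≤ L and |σ| ≤ M. For 0 < v < s ≤ 1 define g₄(s,v) = ∫_v^s ∫_r^s ∫_v^u s^α r^{−α} h(r) v^{−α} (x−v)^{α−1} x^α σ(x) (s−r)^{−(α+1)} dx du dr. Then the iterated integral converges absolutely and there is a constant C, depending only on α, L, M, such that |g₄(s,v)| ≤ C v^{−α} s^{2α} (s−v)^α for all 0 < v < s ≤ 1. In particular, for every fixed s ∈ (0,1], g₄(s,v) → 0 as v → s⁻. -/

import Mathlib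

open MeasureTheory Set intervalIntegral Filter Topology Real

lemma shiftRpowInt {α : ℝ} (hα : 0 < α) (v a b : ℝ) :
    IntervalIntegrable (fun x => (x - v) ^ (α - 1)) volume a b := by
  have h := (intervalIntegral.intervalIntegrable_rpow'
      (by linarith : (-1:ℝ) < α - 1) (a := a - v) (b := b - v)).comp_sub_right v
  simpa using h

lemma shiftRpowVal {α : ℝ} (hα : 0 < α) (v u : ℝ) :
    ∫ x in v..u, (x - v) ^ (α - 1) = (u - v) ^ α / α := by
  have h := intervalIntegral.integral_comp_sub_right (a := v) (b := u)
      (fun x => x ^ (α - 1)) v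
  rw [h, sub_self, integral_rpow (Or.inl (by linarith)),
    show α - 1 + 1 = α by ring, Real.zero_rpow hα.ne', sub_zero]

lemma baseInt {α M : ℝ} (hα : 0 < α) (hM : 0 < M) {v u : ℝ} (σ : ℝ → ℝ)
    (hσm : Measurable σ) (hσ : ∀ x ∈ Icc (0:ℝ) 1, |σ x| ≤ M)
    (hv : 0 < v) (hvu : v ≤ u) (hu1 : u ≤ 1) :
    IntervalIntegrable (fun x => (x - v) ^ (α - 1) * x ^ α * σ x) volume v u := by
  rw [intervalIntegrable_iff_integrableOn_Ioc_of_le hvu]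
  have hmeas : Measurable fun x : ℝ => (x - v) ^ (α - 1) * x ^ α * σ x := by fun_prop
  refine Integrable.mono' (g := fun x => M * (x - v) ^ (α - 1)) ?_ hmeas.aestronglyMeasurable ?_
  · exact ((shiftRpowInt hα v v u).const_mul M).1
  · rw [ae_restrict_iff' measurableSet_Ioc]
    filter_upwards with x hx
    have hx0 : 0 < x := lt_of_le_of_lt hv.le hx.1
    have h1 : (0:ℝ) ≤ (x - v) ^ (α - 1) := rpow_nonneg (by linarith [hx.1.le]) _
    have h2 : x ^ α ≤ 1 := rpow_le_one hx0.le (hx.2.trans hu1) hα.le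
    have h3 : |σ x| ≤ M := hσ x ⟨hx0.le, hx.2.trans hu1⟩
    have h4 : (0:ℝ) ≤ x ^ α := rpow_nonneg hx0.le _
    calc ‖(x - v) ^ (α - 1) * x ^ α * σ x‖
        = (x - v) ^ (α - 1) * x ^ α * |σ x| := by
          rw [norm_eq_abs, abs_mul, abs_mul, abs_of_nonneg h1, abs_of_nonneg h4]
      _ ≤ (x - v) ^ (α - 1) * 1 * M := by
          apply mul_le_mul (mul_le_mul le_rfl h2 h4 h1) h3 (abs_nonneg _)
          positivity
      _ = M * (x - v) ^ (α - 1) := by ring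

lemma baseBound {α M : ℝ} (hα : 0 < α) (hM : 0 < M) {v u s : ℝ} (σ : ℝ → ℝ)
    (hσm : Measurable σ) (hσ : ∀ x ∈ Icc (0:ℝ) 1, |σ x| ≤ M)
    (hv : 0 < v) (hvu : v ≤ u) (hus : u ≤ s) (hs1 : s ≤ 1) :
    |∫ x in v..u, (x - v) ^ (α - 1) * x ^ α * σ x| ≤ M * s ^ α * (s - v) ^ α / α := by
  have hu1 : u ≤ 1 := hus.trans hs1
  have key : ‖∫ x in v..u, (x - v) ^ (α - 1) * x ^ α * σ x‖
      ≤ |∫ x in v..u, (M * s ^ α) * (x - v) ^ (α - 1)| := by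
    apply intervalIntegral.norm_integral_le_abs_of_norm_le
    · rw [uIoc_of_le hvu, ae_restrict_iff' measurableSet_Ioc]
      filter_upwards with x hx
      have hx0 : 0 < x := lt_of_le_of_lt hv.le hx.1
      have h1 : (0:ℝ) ≤ (x - v) ^ (α - 1) := rpow_nonneg (by linarith [hx.1.le]) _
      have h2 : x ^ α ≤ s ^ α := rpow_le_rpow hx0.le (hx.2.trans hus) hα.le
      have h3 : |σ x| ≤ M := hσ x ⟨hx0.le, hx.2.trans hu1⟩
      have h4 : (0:ℝ) ≤ x ^ α := rpow_nonneg hx0.le _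
      calc ‖(x - v) ^ (α - 1) * x ^ α * σ x‖
          = (x - v) ^ (α - 1) * x ^ α * |σ x| := by
            rw [norm_eq_abs, abs_mul, abs_mul, abs_of_nonneg h1, abs_of_nonneg h4]
        _ ≤ (x - v) ^ (α - 1) * s ^ α * M := by
            apply mul_le_mul (mul_le_mul le_rfl h2 h4 h1) h3 (abs_nonneg _)
            have : (0:ℝ) ≤ s ^ α := rpow_nonneg (by linarith) _
            positivity
        _ = M * s ^ α * (x - v) ^ (α - 1) := by ring
    · exact (shiftRpowInt hα v v u).const_mul _
  rw [intervalIntegral.integral_const_mul, shiftRpowVal hα] at key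
  rw [← norm_eq_abs]
  refine key.trans ?_
  have h5 : (u - v) ^ α ≤ (s - v) ^ α := rpow_le_rpow (by linarith) (by linarith) hα.le
  have h6 : (0:ℝ) ≤ s ^ α := rpow_nonneg (by linarith) _
  have h7 : (0:ℝ) ≤ (u - v) ^ α := rpow_nonneg (by linarith) _
  rw [abs_of_nonneg (by positivity)]
  rw [show M * s ^ α * (s - v) ^ α / α = M * s ^ α * ((s - v) ^ α / α) by ring]
  gcongr

/-- The kernel `g₄` from the regular-case Onsager–Machlup computation. -/
noncomputable def g₄ (α : ℝ) (h σ : ℝ → ℝ) (s v : ℝ) : ℝ :=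
  ∫ r in v..s, ∫ u in r..s, ∫ x in v..u,
    s ^ α * r ^ (-α) * h r * v ^ (-α) *
      (x - v) ^ (α - 1) * x ^ α * σ x * (s - r) ^ (-(α + 1))

/-- For `α ∈ (0,1/2)`, `|h| ≤ L`, `|σ| ≤ M`, the iterated integral defining
`g₄` converges absolutely and there is a constant `C = C(α, L, M)` with
`|g₄(s,v)| ≤ C v^{-α} s^{2α} (s-v)^α` for `0 < v < s ≤ 1`; in particular
`g₄` vanishes on the diagonal. -/
theorem g₄_bound
    (α L M : ℝ) (hα0 : 0 < α) (hα1 : α < 1 / 2) (hL : 0 < L) (hM : 0 < M) :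
    ∃ C : ℝ, 0 < C ∧
      ∀ h σ : ℝ → ℝ, Measurable h → Measurable σ →
        (∀ x ∈ Icc (0:ℝ) 1, |h x| ≤ L) → (∀ x ∈ Icc (0:ℝ) 1, |σ x| ≤ M) →
        (∀ v s : ℝ, 0 < v → v < s → s ≤ 1 →
          (∀ r ∈ Ioo v s, ∀ u ∈ Ioo r s,
            IntervalIntegrable
              (fun x => s ^ α * r ^ (-α) * h r * v ^ (-α) *
                (x - v) ^ (α - 1) * x ^ α * σ x * (s - r) ^ (-(α + 1)))
              volume v u) ∧
          (∀ r ∈ Ioo v s,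
            IntervalIntegrable
              (fun u => ∫ x in v..u, s ^ α * r ^ (-α) * h r * v ^ (-α) *
                (x - v) ^ (α - 1) * x ^ α * σ x * (s - r) ^ (-(α + 1)))
              volume r s) ∧
          IntervalIntegrable
            (fun r => ∫ u in r..s, ∫ x in v..u,
              s ^ α * r ^ (-α) * h r * v ^ (-α) *
                (x - v) ^ (α - 1) * x ^ α * σ x * (s - r) ^ (-(α + 1)))
            volume v s ∧
          |g₄ α h σ s v| ≤ C * v ^ (-α) * s ^ (2 * α) * (s - v) ^ α) ∧
        ∀ s ∈ Ioc (0:ℝ) 1,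
          Tendsto (fun v => g₄ α h σ s v) (nhdsWithin s (Iio s)) (nhds 0) := by
  refine ⟨2 * L * M / (α * (1 - 2 * α)), div_pos (by positivity)
    (mul_pos hα0 (by linarith)), ?_⟩
  set C := 2 * L * M / (α * (1 - 2 * α)) with hCdef
  intro h σ hhm hσm hhb hσb
  have hmain : ∀ v s : ℝ, 0 < v → v < s → s ≤ 1 →
      (∀ r ∈ Ioo v s, ∀ u ∈ Ioo r s,
        IntervalIntegrable
          (fun x => s ^ α * r ^ (-α) * h r * v ^ (-α) *
            (x - v) ^ (α - 1) * x ^ α * σ x * (s - r) ^ (-(α + 1)))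
          volume v u) ∧
      (∀ r ∈ Ioo v s,
        IntervalIntegrable
          (fun u => ∫ x in v..u, s ^ α * r ^ (-α) * h r * v ^ (-α) *
            (x - v) ^ (α - 1) * x ^ α * σ x * (s - r) ^ (-(α + 1)))
          volume r s) ∧
      IntervalIntegrable
        (fun r => ∫ u in r..s, ∫ x in v..u,
          s ^ α * r ^ (-α) * h r * v ^ (-α) *
            (x - v) ^ (α - 1) * x ^ α * σ x * (s - r) ^ (-(α + 1)))
        volume v s ∧
      |g₄ α h σ s v| ≤ C * v ^ (-α) * s ^ (2 * α) * (s - v) ^ α := by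
    intro v s hv hvs hs1
    have hs0 : 0 < s := hv.trans hvs
    have hvs' : v ≤ s := hvs.le
    have factored : ∀ r : ℝ, (fun x => s ^ α * r ^ (-α) * h r * v ^ (-α) *
        (x - v) ^ (α - 1) * x ^ α * σ x * (s - r) ^ (-(α + 1)))
        = fun x => (s ^ α * r ^ (-α) * h r * v ^ (-α) * (s - r) ^ (-(α + 1))) *
            ((x - v) ^ (α - 1) * x ^ α * σ x) := by
      intro r; funext x; ring
    -- the primitive of the base function
    have hbase : ∀ u : ℝ, v ≤ u → u ≤ 1 →
        IntervalIntegrable (fun x => (x - v) ^ (α - 1) * x ^ α * σ x) volume v u :=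
      fun u h1 h2 => baseInt hα0 hM σ hσm hσb hv h1 h2
    have hPc : ContinuousOn (fun u => ∫ x in v..u, (x - v) ^ (α - 1) * x ^ α * σ x)
        (uIcc v s) :=
      intervalIntegral.continuousOn_primitive_interval' (hbase s hvs' hs1) left_mem_uIcc
    have hPb : ∀ u ∈ Icc v s,
        |∫ x in v..u, (x - v) ^ (α - 1) * x ^ α * σ x| ≤ M * s ^ α * (s - v) ^ α / α :=
      fun u hu => baseBound hα0 hM σ hσm hσb hv hu.1 hu.2 hs1
    -- item 1
    have item1 : ∀ r ∈ Ioo v s, ∀ u ∈ Ioo r s,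
        IntervalIntegrable
          (fun x => s ^ α * r ^ (-α) * h r * v ^ (-α) *
            (x - v) ^ (α - 1) * x ^ α * σ x * (s - r) ^ (-(α + 1))) volume v u := by
      intro r hr u hu
      rw [factored r]
      exact (hbase u (hr.1.trans hu.1).le (hu.2.le.trans hs1)).const_mul _
    -- item 2
    have item2 : ∀ r ∈ Ioo v s,
        IntervalIntegrable
          (fun u => ∫ x in v..u, s ^ α * r ^ (-α) * h r * v ^ (-α) *
            (x - v) ^ (α - 1) * x ^ α * σ x * (s - r) ^ (-(α + 1))) volume r s := by
      intro r hr
      simp only [factored r, intervalIntegral.integral_const_mul]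
      have hsub : uIcc r s ⊆ uIcc v s := by
        rw [uIcc_of_le hr.2.le, uIcc_of_le hvs']
        exact Icc_subset_Icc hr.1.le le_rfl
      exact ((hPc.mono hsub).intervalIntegrable).const_mul _
    -- constant K
    set K : ℝ := L * M * s ^ α * s ^ α * v ^ (-α) * (s - v) ^ α / α with hKdef
    have hK0 : 0 ≤ K := by
      have := rpow_nonneg hs0.le α
      have := rpow_nonneg (show (0:ℝ) ≤ v by linarith) (-α)
      have := rpow_nonneg (show (0:ℝ) ≤ s - v by linarith) α
      positivity
    -- the key pointwise bound
    have hbound : ∀ r ∈ Ioc v s,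
        ‖(s ^ α * r ^ (-α) * h r * v ^ (-α) * (s - r) ^ (-(α + 1))) *
          ∫ u in r..s, ∫ x in v..u, (x - v) ^ (α - 1) * x ^ α * σ x‖
          ≤ K * (r ^ (-(2*α)) + (s - r) ^ (-(2*α))) := by
      intro r hr
      have hr0 : 0 < r := hv.trans hr.1
      rcases eq_or_lt_of_le hr.2 with heq | hlt
      · rw [heq]
        simp only [intervalIntegral.integral_same, mul_zero, norm_zero]
        exact mul_nonneg hK0 (add_nonneg (rpow_nonneg hs0.le _)
          (rpow_nonneg (by linarith) _))
      · have hsr : 0 < s - r := by linarith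
        have hQb : ‖∫ u in r..s, ∫ x in v..u, (x - v) ^ (α - 1) * x ^ α * σ x‖
            ≤ (M * s ^ α * (s - v) ^ α / α) * (s - r) := by
          have := intervalIntegral.norm_integral_le_of_norm_le_const
            (C := M * s ^ α * (s - v) ^ α / α)
            (f := fun u => ∫ x in v..u, (x - v) ^ (α - 1) * x ^ α * σ x)
            (a := r) (b := s) ?_
          · rwa [abs_of_nonneg (by linarith : (0:ℝ) ≤ s - r)] at this
          · intro u hu
            rw [uIoc_of_le hr.2] at hu
            exact (hPb u ⟨(hr.1.trans hu.1).le, hu.2⟩)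
        have hcb : |s ^ α * r ^ (-α) * h r * v ^ (-α) * (s - r) ^ (-(α + 1))|
            ≤ s ^ α * r ^ (-α) * L * v ^ (-α) * (s - r) ^ (-(α + 1)) := by
          have e1 : (0:ℝ) ≤ s ^ α := rpow_nonneg hs0.le _
          have e2 : (0:ℝ) ≤ r ^ (-α) := rpow_nonneg hr0.le _
          have e3 : (0:ℝ) ≤ v ^ (-α) := rpow_nonneg hv.le _
          have e4 : (0:ℝ) ≤ (s - r) ^ (-(α + 1)) := rpow_nonneg hsr.le _
          have e5 : |h r| ≤ L := hhb r ⟨hr0.le, hr.2.trans hs1⟩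
          rw [abs_mul, abs_mul, abs_mul, abs_mul, abs_of_nonneg e1, abs_of_nonneg e2,
            abs_of_nonneg e3, abs_of_nonneg e4]
          gcongr
        have esr : (s - r) ^ (-(α + 1)) * (s - r) = (s - r) ^ (-α) := by
          rw [show (-α) = -(α + 1) + 1 by ring, Real.rpow_add hsr, Real.rpow_one]
        have ea : (0:ℝ) ≤ r ^ (-α) := rpow_nonneg hr0.le _
        have eb : (0:ℝ) ≤ (s - r) ^ (-α) := rpow_nonneg hsr.le _
        have e2r : r ^ (-α) * r ^ (-α) = r ^ (-(2*α)) := by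
          rw [← Real.rpow_add hr0]; ring_nf
        have e2s : (s - r) ^ (-α) * (s - r) ^ (-α) = (s - r) ^ (-(2*α)) := by
          rw [← Real.rpow_add hsr]; ring_nf
        have e4 : r ^ (-α) * (s - r) ^ (-α) ≤ r ^ (-(2*α)) + (s - r) ^ (-(2*α)) := by
          rw [← e2r, ← e2s]
          nlinarith [sq_nonneg (r ^ (-α) - (s - r) ^ (-α)), mul_nonneg ea eb]
        calc ‖(s ^ α * r ^ (-α) * h r * v ^ (-α) * (s - r) ^ (-(α + 1))) *
              ∫ u in r..s, ∫ x in v..u, (x - v) ^ (α - 1) * x ^ α * σ x‖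
            = |s ^ α * r ^ (-α) * h r * v ^ (-α) * (s - r) ^ (-(α + 1))| *
              ‖∫ u in r..s, ∫ x in v..u, (x - v) ^ (α - 1) * x ^ α * σ x‖ := by
              rw [norm_mul, norm_eq_abs]
          _ ≤ (s ^ α * r ^ (-α) * L * v ^ (-α) * (s - r) ^ (-(α + 1))) *
              ((M * s ^ α * (s - v) ^ α / α) * (s - r)) := by
              apply mul_le_mul hcb hQb (norm_nonneg _)
              have e1 : (0:ℝ) ≤ s ^ α := rpow_nonneg hs0.le _
              have e3 : (0:ℝ) ≤ v ^ (-α) := rpow_nonneg hv.le _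
              have e4' : (0:ℝ) ≤ (s - r) ^ (-(α + 1)) := rpow_nonneg hsr.le _
              positivity
          _ = K * (r ^ (-α) * ((s - r) ^ (-(α + 1)) * (s - r))) := by
              rw [hKdef]; ring
          _ = K * (r ^ (-α) * (s - r) ^ (-α)) := by rw [esr]
          _ ≤ K * (r ^ (-(2*α)) + (s - r) ^ (-(2*α))) :=
              mul_le_mul_of_nonneg_left e4 hK0
    -- integrability of the dominating function
    have hexp : (-1:ℝ) < -(2*α) := by linarith
    have iInt1 : IntervalIntegrable (fun r => r ^ (-(2*α))) volume v s :=
      intervalIntegral.intervalIntegrable_rpow' hexp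
    have iInt2 : IntervalIntegrable (fun r : ℝ => (s - r) ^ (-(2*α))) volume v s := by
      have h2 := (intervalIntegral.intervalIntegrable_rpow' hexp
        (a := 0) (b := s - v)).comp_sub_left s
      have h3 := h2.symm
      simpa using h3
    have hgInt : IntervalIntegrable
        (fun r => K * (r ^ (-(2*α)) + (s - r) ^ (-(2*α)))) volume v s :=
      (iInt1.add iInt2).const_mul K
    -- item 3
    have item3 : IntervalIntegrable
        (fun r => ∫ u in r..s, ∫ x in v..u,
          s ^ α * r ^ (-α) * h r * v ^ (-α) *
            (x - v) ^ (α - 1) * x ^ α * σ x * (s - r) ^ (-(α + 1))) volume v s := by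
      have hfun : ∀ r : ℝ, (∫ u in r..s, ∫ x in v..u,
          s ^ α * r ^ (-α) * h r * v ^ (-α) *
            (x - v) ^ (α - 1) * x ^ α * σ x * (s - r) ^ (-(α + 1)))
          = (s ^ α * r ^ (-α) * h r * v ^ (-α) * (s - r) ^ (-(α + 1))) *
            ∫ u in r..s, ∫ x in v..u, (x - v) ^ (α - 1) * x ^ α * σ x := by
        intro r
        simp only [factored r, intervalIntegral.integral_const_mul]
      rw [show (fun r => ∫ u in r..s, ∫ x in v..u,
          s ^ α * r ^ (-α) * h r * v ^ (-α) *
            (x - v) ^ (α - 1) * x ^ α * σ x * (s - r) ^ (-(α + 1)))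
          = fun r => (s ^ α * r ^ (-α) * h r * v ^ (-α) * (s - r) ^ (-(α + 1))) *
            ∫ u in r..s, ∫ x in v..u, (x - v) ^ (α - 1) * x ^ α * σ x
          from funext hfun]
      rw [intervalIntegrable_iff_integrableOn_Ioc_of_le hvs']
      -- rewrite the inner integral via a continuous primitive
      have hRint : ∀ r ∈ Icc v s, IntervalIntegrable
          (fun u => ∫ x in v..u, (x - v) ^ (α - 1) * x ^ α * σ x) volume v r := by
        intro r hrIcc
        apply ContinuousOn.intervalIntegrable
        refine hPc.mono ?_
        rw [uIcc_of_le hrIcc.1, uIcc_of_le hvs']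
        exact Icc_subset_Icc le_rfl hrIcc.2
      have hRint2 : ∀ r ∈ Icc v s, IntervalIntegrable
          (fun u => ∫ x in v..u, (x - v) ^ (α - 1) * x ^ α * σ x) volume r s := by
        intro r hrIcc
        apply ContinuousOn.intervalIntegrable
        refine hPc.mono ?_
        rw [uIcc_of_le hrIcc.2, uIcc_of_le hvs']
        exact Icc_subset_Icc hrIcc.1 le_rfl
      have hQeq : ∀ r ∈ Icc v s,
          (∫ u in r..s, ∫ x in v..u, (x - v) ^ (α - 1) * x ^ α * σ x)
          = (∫ u in v..s, ∫ x in v..u, (x - v) ^ (α - 1) * x ^ α * σ x)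
            - ∫ u in v..r, ∫ x in v..u, (x - v) ^ (α - 1) * x ^ α * σ x := by
        intro r hrIcc
        have := intervalIntegral.integral_add_adjacent_intervals
          (hRint r hrIcc) (hRint2 r hrIcc)
        linarith [this]
      have hRc : ContinuousOn (fun r => ∫ u in v..r, ∫ x in v..u,
          (x - v) ^ (α - 1) * x ^ α * σ x) (uIcc v s) :=
        intervalIntegral.continuousOn_primitive_interval'
          (hRint2 v ⟨le_rfl, hvs'⟩) left_mem_uIcc
      refine IntegrableOn.congr_fun (f := fun r =>
        (s ^ α * r ^ (-α) * h r * v ^ (-α) * (s - r) ^ (-(α + 1))) *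
          ((∫ u in v..s, ∫ x in v..u, (x - v) ^ (α - 1) * x ^ α * σ x)
            - ∫ u in v..r, ∫ x in v..u, (x - v) ^ (α - 1) * x ^ α * σ x)) ?_ ?_
        measurableSet_Ioc
      · -- integrability of the R-version
        refine Integrable.mono' (g := fun r => K * (r ^ (-(2*α)) + (s - r) ^ (-(2*α))))
          ?_ ?_ ?_
        · rw [intervalIntegrable_iff_integrableOn_Ioc_of_le hvs'] at hgInt
          exact hgInt
        · have hcm : Measurable fun r : ℝ =>
              s ^ α * r ^ (-α) * h r * v ^ (-α) * (s - r) ^ (-(α + 1)) := by fun_prop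
          have hRm : AEStronglyMeasurable (fun r => (∫ u in v..s, ∫ x in v..u,
              (x - v) ^ (α - 1) * x ^ α * σ x)
              - ∫ u in v..r, ∫ x in v..u, (x - v) ^ (α - 1) * x ^ α * σ x)
              (volume.restrict (Ioc v s)) := by
            apply ContinuousOn.aestronglyMeasurable _ measurableSet_Ioc
            apply (continuousOn_const.sub hRc).mono
            rw [uIcc_of_le hvs']
            exact Ioc_subset_Icc_self
          exact (hcm.aestronglyMeasurable.restrict).mul hRm
        · rw [ae_restrict_iff' measurableSet_Ioc]
          filter_upwards with r hr
          have := hbound r hr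
          rw [← hQeq r ⟨hr.1.le, hr.2⟩]
          exact this
      · intro r hr
        simp only [hQeq r ⟨hr.1.le, hr.2⟩]
    -- the final bound
    have hg4eq : g₄ α h σ s v = ∫ r in v..s,
        (s ^ α * r ^ (-α) * h r * v ^ (-α) * (s - r) ^ (-(α + 1))) *
          ∫ u in r..s, ∫ x in v..u, (x - v) ^ (α - 1) * x ^ α * σ x := by
      rw [g₄]
      apply intervalIntegral.integral_congr
      intro r _
      simp only [factored r, intervalIntegral.integral_const_mul]
    have hfinal : |g₄ α h σ s v| ≤ C * v ^ (-α) * s ^ (2 * α) * (s - v) ^ α := by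
      rw [hg4eq, ← norm_eq_abs]
      have step1 : ‖∫ r in v..s,
          (s ^ α * r ^ (-α) * h r * v ^ (-α) * (s - r) ^ (-(α + 1))) *
            ∫ u in r..s, ∫ x in v..u, (x - v) ^ (α - 1) * x ^ α * σ x‖
          ≤ |∫ r in v..s, K * (r ^ (-(2*α)) + (s - r) ^ (-(2*α)))| := by
        apply intervalIntegral.norm_integral_le_abs_of_norm_le _ hgInt
        rw [uIoc_of_le hvs', ae_restrict_iff' measurableSet_Ioc]
        filter_upwards with r hr
        exact hbound r hr
      refine step1.trans ?_
      -- compute the integral of the dominating function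
      have i1 : ∫ r in v..s, r ^ (-(2*α))
          = (s ^ (-(2*α)+1) - v ^ (-(2*α)+1)) / (-(2*α)+1) := integral_rpow (Or.inl hexp)
      have i2 : ∫ r in v..s, (s - r) ^ (-(2*α))
          = (s - v) ^ (-(2*α)+1) / (-(2*α)+1) := by
        have h2 := intervalIntegral.integral_comp_sub_left (a := v) (b := s)
          (fun x => x ^ (-(2*α))) s
        rw [h2, sub_self, integral_rpow (Or.inl hexp),
          Real.zero_rpow (by linarith), sub_zero]
      rw [intervalIntegral.integral_const_mul, intervalIntegral.integral_add iInt1 iInt2,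
        i1, i2]
      have hβ : (0:ℝ) < -(2*α)+1 := by linarith
      have hsβ : s ^ (-(2*α)+1) ≤ 1 := Real.rpow_le_one hs0.le hs1 hβ.le
      have hvβ : (0:ℝ) ≤ v ^ (-(2*α)+1) := rpow_nonneg hv.le _
      have hvsβ : v ^ (-(2*α)+1) ≤ s ^ (-(2*α)+1) := rpow_le_rpow hv.le hvs' hβ.le
      have hsvβ0 : (0:ℝ) ≤ (s - v) ^ (-(2*α)+1) := rpow_nonneg (by linarith) _
      have hsvβ1 : (s - v) ^ (-(2*α)+1) ≤ 1 :=
        Real.rpow_le_one (by linarith) (by linarith) hβ.le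
      have hAnn : (0:ℝ) ≤ (s ^ (-(2*α)+1) - v ^ (-(2*α)+1)) / (-(2*α)+1) :=
        div_nonneg (by linarith) hβ.le
      have hBnn : (0:ℝ) ≤ (s - v) ^ (-(2*α)+1) / (-(2*α)+1) := div_nonneg hsvβ0 hβ.le
      rw [abs_of_nonneg (mul_nonneg hK0 (add_nonneg hAnn hBnn))]
      have hstep : (s ^ (-(2*α)+1) - v ^ (-(2*α)+1)) / (-(2*α)+1)
          + (s - v) ^ (-(2*α)+1) / (-(2*α)+1) ≤ 2 / (-(2*α)+1) := by
        rw [show (2:ℝ) / (-(2*α)+1) = 1/(-(2*α)+1) + 1/(-(2*α)+1) by ring]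
        gcongr <;> linarith
      have hs2 : s ^ (2*α) = s ^ α * s ^ α := by
        rw [show (2:ℝ)*α = α + α by ring, Real.rpow_add hs0]
      have hαne : α ≠ 0 := hα0.ne'
      have h12 : -(2*α)+1 ≠ 0 := by linarith
      calc K * ((s ^ (-(2*α)+1) - v ^ (-(2*α)+1)) / (-(2*α)+1)
            + (s - v) ^ (-(2*α)+1) / (-(2*α)+1))
          ≤ K * (2 / (-(2*α)+1)) := mul_le_mul_of_nonneg_left hstep hK0
        _ = C * v ^ (-α) * s ^ (2 * α) * (s - v) ^ α := by
            rw [hs2, hCdef, hKdef]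
            have h12' : (1:ℝ) - 2*α ≠ 0 := by linarith
            have h12'' : α * (1 - 2*α) ≠ 0 := mul_ne_zero hαne h12'
            field_simp
            try ring
    exact ⟨item1, item2, item3, hfinal⟩
  refine ⟨hmain, ?_⟩
  intro s hs
  obtain ⟨hs0, hs1⟩ := hs
  apply squeeze_zero_norm'
    (a := fun v => (C * (s/2) ^ (-α) * s ^ (2*α)) * (s - v) ^ α)
  · filter_upwards [Ioo_mem_nhdsLT_of_mem (show s ∈ Ioc (s/2) s from ⟨by linarith, le_rfl⟩)]
      with v hv
    have hv0 : 0 < v := lt_trans (by linarith) hv.1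
    have hb := (hmain v s hv0 hv.2 hs1).2.2.2
    rw [norm_eq_abs]
    refine hb.trans ?_
    have h1 : v ^ (-α) ≤ (s/2) ^ (-α) :=
      (Real.rpow_le_rpow_iff_of_neg hv0 (by linarith) (by linarith)).2 hv.1.le
    have h2 : (0:ℝ) ≤ s ^ (2*α) := rpow_nonneg hs0.le _
    have h3 : (0:ℝ) ≤ (s - v) ^ α := rpow_nonneg (by linarith [hv.2]) _
    have hC0 : (0:ℝ) ≤ C := le_of_lt (div_pos (by positivity) (mul_pos hα0 (by linarith)))
    calc C * v ^ (-α) * s ^ (2 * α) * (s - v) ^ α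
        ≤ C * (s/2) ^ (-α) * s ^ (2 * α) * (s - v) ^ α := by gcongr
      _ = (C * (s/2) ^ (-α) * s ^ (2*α)) * (s - v) ^ α := by ring
  · have t1 : Tendsto (fun v : ℝ => s - v) (𝓝[<] s) (𝓝 0) := by
      have hc : Continuous (fun v : ℝ => s - v) := continuous_const.sub continuous_id
      have := (hc.tendsto s).mono_left (nhdsWithin_le_nhds (s := Iio s))
      simpa using this
    have t2 : Tendsto (fun v : ℝ => (s - v) ^ α) (𝓝[<] s) (𝓝 0) := by
      have hc := (Real.continuousAt_rpow_const 0 α (Or.inr hα0.le)).tendsto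
      have := hc.comp t1
      simpa [Function.comp_def, Real.zero_rpow hα0.ne'] using this
    have := t2.const_mul (C * (s/2) ^ (-α) * s ^ (2*α))
    simpa using this
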